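/- arXiv:1112.5064 — 2 statements merged into one kernel-verified Lean document; each statement's English description precedes it below -/
import Mathlib

section
/- For integers n ≥ 1 and 1 ≤ k < n, the state |Φ₀ⁿ⟩ satisfies the tensor decomposition |Φ₀ⁿ⟩ = (1/√2)(|Φ₀ᵏ⟩⊗|Φ₀^{n−k}⟩ − |Φ₁ᵏ⟩⊗|Φ₁^{n−k}⟩), as vectors in (ℂ²)^{⊗n} ≅ (ℂ²)^{⊗k} ⊗ (ℂ²)^{⊗(n−k)}. -/
/-- Hamming weight of a bit string. -/
def hammingWeight {n : ℕ} (y : Fin n → Bool) : ℕ :=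
  (Finset.univ.filter (fun i => y i = true)).card

/-- The state `|Φ₀ⁿ⟩`, given by its amplitudes on the computational basis. -/
noncomputable def Phi0 (n : ℕ) : (Fin n → Bool) → ℂ := fun y =>
  (((Real.sqrt 2) ^ (n - 1))⁻¹ : ℝ) *
    (if hammingWeight y % 4 = 0 then 1 else if hammingWeight y % 4 = 2 then -1 else 0)

/-- The state `|Φ₁ⁿ⟩`, given by its amplitudes on the computational basis. -/
noncomputable def Phi1 (n : ℕ) : (Fin n → Bool) → ℂ := fun y =>
  (((Real.sqrt 2) ^ (n - 1))⁻¹ : ℝ) *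
    (if hammingWeight y % 4 = 1 then 1 else if hammingWeight y % 4 = 3 then -1 else 0)

lemma hammingWeight_append {k m : ℕ} (u : Fin k → Bool) (v : Fin m → Bool) :
    hammingWeight (Fin.append u v) = hammingWeight u + hammingWeight v := by
  unfold hammingWeight
  rw [Finset.card_filter, Finset.card_filter, Finset.card_filter,
    Fin.sum_univ_add]
  simp [Fin.append_left, Fin.append_right]

/-- For `1 ≤ k` and `1 ≤ m` (i.e. `n = k + m` with `1 ≤ k < n`), one has the tensor
decomposition `|Φ₀ⁿ⟩ = (1/√2)(|Φ₀ᵏ⟩⊗|Φ₀ᵐ⟩ − |Φ₁ᵏ⟩⊗|Φ₁ᵐ⟩)`, stated amplitude-wise via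
the identification `(ℂ²)^{⊗(k+m)} ≅ (ℂ²)^{⊗k} ⊗ (ℂ²)^{⊗m}` given by `Fin.append`. -/
theorem phi0_tensor_decomposition (k m : ℕ) (hk : 1 ≤ k) (hm : 1 ≤ m)
    (u : Fin k → Bool) (v : Fin m → Bool) :
    Phi0 (k + m) (Fin.append u v) =
      ((Real.sqrt 2 : ℝ) : ℂ)⁻¹ * (Phi0 k u * Phi0 m v - Phi1 k u * Phi1 m v) := by
  have hs : (Real.sqrt 2 : ℝ) ≠ 0 := by positivity
  have hpow : (Real.sqrt 2) ^ (k + m - 1) =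
      Real.sqrt 2 * ((Real.sqrt 2) ^ (k - 1) * (Real.sqrt 2) ^ (m - 1)) := by
    rw [← pow_add, ← pow_succ']
    congr 1
    omega
  unfold Phi0 Phi1
  rw [hammingWeight_append]
  set a := hammingWeight u
  set b := hammingWeight v
  have hab : (a + b) % 4 = (a % 4 + b % 4) % 4 := by omega
  rw [hab, hpow]
  push_cast [mul_inv]
  have ha : a % 4 < 4 := by omega
  have hb : b % 4 < 4 := by omega
  interval_cases h1 : a % 4 <;> interval_cases h2 : b % 4 <;> norm_num
end

section
/- Let φ₀, φ₁ be orthonormal vectors in a finite-dimensional Hilbert space H_A, let σ = (1/2)(|φ₀⟩⟨φ₀| + |φ₁⟩⟨φ₁|), and let ρ be any density operator on H_A whose compression to span{φ₀,φ₁} is the matrix [[p, √(pq)cosθ],[√(pq)cosθ, q]] in the basis (φ₀,φ₁), with p,q ≥ 0, p+q ≤ 1, θ ∈ [0,π/2]. Then the fidelity satisfies F(σ,ρ)² = tr(√(√σ ρ √σ))² = (p + q + 2√(pq)·sin θ)/2. -/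
open ComplexOrder Matrix

/-- Positive semidefinite square root of a matrix (junk value `0` off the PSD cone). -/
noncomputable def matSqrt {n : ℕ} (A : Matrix (Fin n) (Fin n) ℂ) : Matrix (Fin n) (Fin n) ℂ := by
  classical exact if h : A.PosSemidef then
    (h.1.eigenvectorUnitary : Matrix (Fin n) (Fin n) ℂ) *
      diagonal ((↑) ∘ (Real.sqrt ·) ∘ h.1.eigenvalues) *
      (star h.1.eigenvectorUnitary : Matrix (Fin n) (Fin n) ℂ) else 0

/-- Fidelity `F(σ,ρ) = tr √(√σ ρ √σ)` of two (PSD) matrices. -/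
noncomputable def fidelity {n : ℕ} (σ ρ : Matrix (Fin n) (Fin n) ℂ) : ℝ :=
  (Matrix.trace (matSqrt (matSqrt σ * ρ * matSqrt σ))).re

variable {n : ℕ}

lemma vmv_mul_vmv (u v w x : Fin n → ℂ) :
    vecMulVec u v * vecMulVec w x = (v ⬝ᵥ w) • vecMulVec u x := by
  ext i j
  simp only [Matrix.mul_apply, vecMulVec_apply, Matrix.smul_apply, smul_eq_mul, dotProduct,
    Finset.sum_mul, Finset.mul_sum]
  exact Finset.sum_congr rfl fun k _ => by ring

lemma vmv_mul_mat (u v : Fin n → ℂ) (A : Matrix (Fin n) (Fin n) ℂ) :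
    vecMulVec u v * A = vecMulVec u (v ᵥ* A) := by
  ext i j
  simp only [Matrix.mul_apply, vecMulVec_apply, vecMul, dotProduct, Finset.mul_sum]
  exact Finset.sum_congr rfl fun k _ => by ring

lemma mat_mul_vmv (u v : Fin n → ℂ) (A : Matrix (Fin n) (Fin n) ℂ) :
    A * vecMulVec u v = vecMulVec (A *ᵥ u) v := by
  ext i j
  simp only [Matrix.mul_apply, vecMulVec_apply, mulVec, dotProduct, Finset.sum_mul]
  exact Finset.sum_congr rfl fun k _ => by ring

lemma vmv_sandwich (u v w x : Fin n → ℂ) (A : Matrix (Fin n) (Fin n) ℂ) :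
    vecMulVec u v * A * vecMulVec w x = (v ⬝ᵥ A *ᵥ w) • vecMulVec u x := by
  rw [vmv_mul_mat, vmv_mul_vmv, dotProduct_mulVec]

lemma trace_vmv (u v : Fin n → ℂ) : Matrix.trace (vecMulVec u v) = v ⬝ᵥ u := by
  simp only [Matrix.trace, Matrix.diag, vecMulVec_apply, dotProduct]
  exact Finset.sum_congr rfl fun k _ => by ring

lemma conjTranspose_vmv (u : Fin n → ℂ) :
    (vecMulVec u (star u))ᴴ = vecMulVec u (star u) := by
  ext i j
  simp [conjTranspose_apply, vecMulVec_apply, mul_comm]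

lemma posSemidef_vmv (u : Fin n → ℂ) : (vecMulVec u (star u)).PosSemidef := by
  refine PosSemidef.of_dotProduct_mulVec_nonneg (conjTranspose_vmv u) fun x => ?_
  have hmv : (vecMulVec u (star u)) *ᵥ x = (star u ⬝ᵥ x) • u := by
    ext i
    simp only [mulVec, vecMulVec_apply, dotProduct, Pi.smul_apply, smul_eq_mul, Finset.sum_mul]
    exact Finset.sum_congr rfl fun k _ => by ring
  rw [hmv, dotProduct_smul, smul_eq_mul]
  have hst : star x ⬝ᵥ u = star (star u ⬝ᵥ x) := by
    rw [star_dotProduct]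
  rw [hst]
  exact mul_star_self_nonneg _

lemma posSemidef_real_smul {A : Matrix (Fin n) (Fin n) ℂ} (hA : A.PosSemidef) {c : ℝ}
    (hc : 0 ≤ c) : (((c : ℂ)) • A).PosSemidef := by
  refine PosSemidef.of_dotProduct_mulVec_nonneg ?_ fun x => ?_
  · have : ((c : ℂ)) • A = Matrix.of fun i j => (c : ℂ) * A i j := by ext i j; simp
    unfold Matrix.IsHermitian
    rw [conjTranspose_smul, hA.1]
    congr 1
    simp [Complex.star_def, Complex.conj_ofReal]
  · rw [smul_mulVec, dotProduct_smul, smul_eq_mul]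
    exact mul_nonneg (Complex.zero_le_real.mpr hc) (hA.dotProduct_mulVec_nonneg x)

open scoped MatrixOrder in
lemma matSqrt_eq {A B : Matrix (Fin n) (Fin n) ℂ} (hB : B.PosSemidef) (h : B * B = A) :
    matSqrt A = B := by
  have hsq : B ^ 2 = A := by rw [pow_two, h]
  have hA : A.PosSemidef := hsq ▸ hB.pow 2
  have key : matSqrt A = cfc Real.sqrt A := by
    rw [hA.1.cfc_eq]
    simp only [matSqrt, dif_pos hA]
    rw [IsHermitian.cfc, Unitary.conjStarAlgAut_apply]
    rfl
  rw [key, ← cfcₙ_eq_cfc, ← CFC.sqrt_eq_real_sqrt A hA.nonneg]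
  exact CFC.sqrt_unique h hB.nonneg


set_option maxHeartbeats 1000000 in
/-- For orthonormal `φ₀, φ₁`, `σ = (1/2)(|φ₀⟩⟨φ₀| + |φ₁⟩⟨φ₁|)`, and a density matrix `ρ`
whose compression to `span{φ₀,φ₁}` is `[[p, √(pq)cosθ],[√(pq)cosθ, q]]` (with `p,q ≥ 0`,
`p+q ≤ 1`, `θ ∈ [0,π/2]`), the fidelity satisfies `F(σ,ρ)² = (p + q + 2√(pq)·sin θ)/2`. -/
theorem fidelity_compression (N : ℕ) (φ₀ φ₁ : Fin N → ℂ)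
    (h₀ : star φ₀ ⬝ᵥ φ₀ = 1) (h₁ : star φ₁ ⬝ᵥ φ₁ = 1) (h01 : star φ₀ ⬝ᵥ φ₁ = 0)
    (ρ : Matrix (Fin N) (Fin N) ℂ) (hρ : ρ.PosSemidef) (hρtr : Matrix.trace ρ = 1)
    (p q θ : ℝ) (hp : 0 ≤ p) (hq : 0 ≤ q) (hpq : p + q ≤ 1)
    (hθ₀ : 0 ≤ θ) (hθ₁ : θ ≤ Real.pi / 2)
    (hc00 : star φ₀ ⬝ᵥ ρ.mulVec φ₀ = (p : ℂ))
    (hc11 : star φ₁ ⬝ᵥ ρ.mulVec φ₁ = (q : ℂ))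
    (hc01 : star φ₀ ⬝ᵥ ρ.mulVec φ₁ = ((Real.sqrt (p * q) * Real.cos θ : ℝ) : ℂ))
    (hc10 : star φ₁ ⬝ᵥ ρ.mulVec φ₀ = ((Real.sqrt (p * q) * Real.cos θ : ℝ) : ℂ)) :
    (fidelity (((1 : ℂ) / 2) •
        (Matrix.vecMulVec φ₀ (star φ₀) + Matrix.vecMulVec φ₁ (star φ₁))) ρ) ^ 2 =
      (p + q + 2 * Real.sqrt (p * q) * Real.sin θ) / 2 := by
  have h10 : star φ₁ ⬝ᵥ φ₀ = 0 := by
    have := congrArg star h01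
    rwa [star_dotProduct, star_star, star_zero] at this
  set r : ℝ := Real.sqrt (p * q) * Real.cos θ with hr
  set e : ℝ := Real.sqrt (p * q) * Real.sin θ with he
  have hsin : 0 ≤ Real.sin θ :=
    Real.sin_nonneg_of_nonneg_of_le_pi hθ₀ (hθ₁.trans (by linarith [Real.pi_pos]))
  have hee : 0 ≤ e := mul_nonneg (Real.sqrt_nonneg _) hsin
  set Pi2 : Matrix (Fin N) (Fin N) ℂ :=
    Matrix.vecMulVec φ₀ (star φ₀) + Matrix.vecMulVec φ₁ (star φ₁) with hPi2
  set Mm : Matrix (Fin N) (Fin N) ℂ :=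
    (p : ℂ) • Matrix.vecMulVec φ₀ (star φ₀) + (q : ℂ) • Matrix.vecMulVec φ₁ (star φ₁) +
      (r : ℂ) • (Matrix.vecMulVec φ₀ (star φ₁) + Matrix.vecMulVec φ₁ (star φ₀)) with hMm
  have hPP : Pi2 * Pi2 = Pi2 := by
    rw [hPi2]
    simp only [add_mul, mul_add, vmv_mul_vmv, h₀, h₁, h01, h10, one_smul, zero_smul,
      add_zero, zero_add]
  have hPiPSD : Pi2.PosSemidef := (posSemidef_vmv φ₀).add (posSemidef_vmv φ₁)
  have hMeq : Pi2 * ρ * Pi2 = Mm := by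
    rw [hPi2, hMm]
    simp only [add_mul, mul_add, vmv_sandwich, hc00, hc01, hc10, hc11]
    ext i j
    simp only [Matrix.add_apply, Matrix.smul_apply, Matrix.vecMulVec_apply, smul_eq_mul]
    push_cast
    ring
  have hMPSD : Mm.PosSemidef := by
    have := hρ.mul_mul_conjTranspose_same Pi2
    rw [hPiPSD.1, hMeq] at this
    exact this
  -- sqrt of σ
  have hc2 : ((Real.sqrt 2)⁻¹ : ℝ) * (Real.sqrt 2)⁻¹ = 1 / 2 := by
    rw [← mul_inv, Real.mul_self_sqrt (by norm_num : (0:ℝ) ≤ 2)]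
    norm_num
  have hT : matSqrt (((1 : ℂ) / 2) • Pi2) = (((Real.sqrt 2)⁻¹ : ℝ) : ℂ) • Pi2 := by
    apply matSqrt_eq (posSemidef_real_smul hPiPSD (by positivity))
    rw [smul_mul_assoc, mul_smul_comm, hPP, smul_smul, ← Complex.ofReal_mul, hc2]
    norm_num
  have hred : matSqrt (((1 : ℂ) / 2) • Pi2) * ρ * matSqrt (((1 : ℂ) / 2) • Pi2) =
      ((1 : ℂ) / 2) • Mm := by
    rw [hT, smul_mul_assoc, smul_mul_assoc, mul_smul_comm, smul_smul, hMeq,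
      ← Complex.ofReal_mul, hc2]
    norm_num
  have hfid : fidelity (((1 : ℂ) / 2) • Pi2) ρ =
      (Matrix.trace (matSqrt (((1 : ℂ) / 2) • Mm))).re := by
    unfold fidelity
    rw [hred]
  rw [hfid]
  -- case split on s := p + q + 2e
  set s : ℝ := p + q + 2 * e with hs
  have hrhs : (p + q + 2 * Real.sqrt (p * q) * Real.sin θ) / 2 = s / 2 := by
    rw [hs, he]; ring_nf
  rw [hrhs]
  rcases le_or_gt s 0 with hs0 | hs0
  · -- degenerate case: p = q = 0
    have hp0 : p = 0 := by linarith
    have hq0 : q = 0 := by linarith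
    have hr0 : r = 0 := by
      rw [hr, hp0]; simp
    have hM0 : Mm = 0 := by
      rw [hMm, hp0, hq0, hr0]; simp
    rw [hM0, smul_zero, matSqrt_eq Matrix.PosSemidef.zero (by simp)]
    simp only [Matrix.trace_zero, Complex.zero_re]
    have : s = 0 := le_antisymm hs0 (by positivity)
    rw [this]
    norm_num
  · -- main case
    set y : ℝ := (Real.sqrt (2 * s))⁻¹ with hy
    set x : ℝ := e * y with hx
    have hy0 : 0 ≤ y := by positivity
    have hx0 : 0 ≤ x := mul_nonneg hee hy0
    have hy2 : y * y = 1 / (2 * s) := by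
      rw [hy, ← mul_inv, Real.mul_self_sqrt (by linarith), one_div]
    have he2 : e * e = p * q - r * r := by
      rw [he, hr]
      have h1 : Real.sqrt (p * q) * Real.sqrt (p * q) = p * q :=
        Real.mul_self_sqrt (mul_nonneg hp hq)
      nlinarith [Real.sin_sq_add_cos_sq θ]
    -- candidate square root S
    set S : Matrix (Fin N) (Fin N) ℂ := (x : ℂ) • Pi2 + (y : ℂ) • Mm with hSdef
    have hSPSD : S.PosSemidef :=
      (posSemidef_real_smul hPiPSD hx0).add (posSemidef_real_smul hMPSD hy0)
    have hPM : Pi2 * Mm = Mm := by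
      rw [hPi2, hMm]
      simp only [mul_add, add_mul, mul_smul_comm, vmv_mul_vmv, h₀, h₁, h01, h10,
        one_smul, zero_smul, smul_zero, add_zero, zero_add]
    have hMP : Mm * Pi2 = Mm := by
      rw [hPi2, hMm]
      simp only [mul_add, add_mul, smul_mul_assoc, vmv_mul_vmv, h₀, h₁, h01, h10,
        one_smul, zero_smul, smul_zero, add_zero, zero_add]
      ext i j
      simp only [Matrix.add_apply, Matrix.smul_apply, Matrix.vecMulVec_apply, smul_eq_mul]
      ring
    have hM2 : Mm * Mm = ((p + q : ℝ) : ℂ) • Mm - ((p * q - r * r : ℝ) : ℂ) • Pi2 := by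
      rw [hPi2, hMm]
      simp only [mul_add, add_mul, smul_mul_assoc, mul_smul_comm, vmv_mul_vmv,
        h₀, h₁, h01, h10, one_smul, zero_smul, smul_zero, add_zero, zero_add, smul_smul]
      ext i j
      simp only [Matrix.add_apply, Matrix.sub_apply, Matrix.smul_apply,
        Matrix.vecMulVec_apply, smul_eq_mul]
      push_cast
      ring
    -- scalar identities
    have hxc : (x : ℂ) * (x : ℂ) = (y : ℂ) * (y : ℂ) * ((p : ℂ) * q - (r : ℂ) * r) := by
      have : x * x = y * y * (p * q - r * r) := by rw [hx, ← he2]; ring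
      have := congrArg (Complex.ofReal) this
      push_cast at this
      convert this using 1 <;> push_cast <;> ring
    have hmc : (x : ℂ) * (y : ℂ) + (y : ℂ) * (x : ℂ) + (y : ℂ) * (y : ℂ) * ((p : ℂ) + q)
        = 1 / 2 := by
      have hre : x * y + y * x + y * y * (p + q) = 1 / 2 := by
        have h1 : x * y + y * x + y * y * (p + q) = y * y * s := by rw [hx, hs]; ring
        rw [h1, hy2]
        field_simp
      have := congrArg (Complex.ofReal) hre
      push_cast at this
      convert this using 1 <;> push_cast <;> ring
    have hS2 : S * S = ((1 : ℂ) / 2) • Mm := by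
      rw [hSdef]
      simp only [add_mul, mul_add, smul_mul_assoc, mul_smul_comm, hPP, hPM, hMP, hM2,
        smul_smul]
      ext i j
      simp only [Matrix.add_apply, Matrix.sub_apply, Matrix.smul_apply, smul_eq_mul]
      push_cast
      linear_combination hxc * Pi2 i j + hmc * Mm i j
    rw [matSqrt_eq hSPSD hS2]
    -- compute the trace
    have htrP : Matrix.trace Pi2 = 2 := by
      rw [hPi2, Matrix.trace_add, trace_vmv, trace_vmv, h₀, h₁]
      norm_num
    have htrM : Matrix.trace Mm = ((p + q : ℝ) : ℂ) := by
      rw [hMm]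
      simp only [Matrix.trace_add, Matrix.trace_smul, trace_vmv, h₀, h₁, h01, h10]
      push_cast
      simp [smul_eq_mul]
    have htrS : Matrix.trace S = ((2 * x + y * (p + q) : ℝ) : ℂ) := by
      rw [hSdef, Matrix.trace_add, Matrix.trace_smul, Matrix.trace_smul, htrP, htrM,
        smul_eq_mul, smul_eq_mul, ← Complex.ofReal_mul]
      push_cast
      ring
    rw [htrS, Complex.ofReal_re]
    -- final real arithmetic
    have hxs : 2 * x + y * (p + q) = y * s := by rw [hx, hs]; ring
    rw [hxs]
    have : y * s * (y * s) = s / 2 := by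
      have : y * y * (s * s) = s / 2 := by
        rw [hy2]; field_simp
      nlinarith [this]
    nlinarith [this]
end
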